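/- Let u be a sequence over a finite alphabet. Then u is eventually periodic if and only if there exists n ∈ ℕ such that r_u(n+2) = r_u(n). -/

import Mathlib

namespace ReflPaper

variable {A : Type*}

/-- The factor of `u` of length `n` at position `i`: `u(i) u(i+1) ⋯ u(i+n-1)`. -/
def factorAt (u : ℕ → A) (n i : ℕ) : List A :=
  (List.range n).map (fun k => u (i + k))

/-- The word `w` occurs in the sequence `u` at position `i`. -/
def OccursAt (u : ℕ → A) (w : List A) (i : ℕ) : Prop :=
  w = factorAt u w.length i

/-- The language of `u`: the set of all factors of `u`. -/
def Lang (u : ℕ → A) : Set (List A) := {w | ∃ i, OccursAt u w i}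

/-- The set of factors of `u` of length `n`. -/
def LangN (u : ℕ → A) (n : ℕ) : Set (List A) := {w | w.length = n ∧ w ∈ Lang u}

/-- The word `w` occurs infinitely many times in `u`. -/
def OccursInf (u : ℕ → A) (w : List A) : Prop := {i | OccursAt u w i}.Infinite

/-- `u` is eventually periodic. -/
def EventuallyPeriodic (u : ℕ → A) : Prop :=
  ∃ N p : ℕ, 1 ≤ p ∧ ∀ i, N ≤ i → u (i + p) = u i

/-- Two words are reflectively equivalent if one equals the other or its reversal. -/
def ReflEquiv (w v : List A) : Prop := w = v ∨ w = v.reverse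

/-- Reflective equivalence as a setoid on words. -/
def reflSetoid (A : Type*) : Setoid (List A) where
  r := ReflEquiv
  iseqv := by
    constructor
    · intro w; exact Or.inl rfl
    · intro w v h
      rcases h with h | h
      · exact Or.inl h.symm
      · subst h; simp [ReflEquiv]
    · intro w v x h1 h2
      rcases h1 with h1 | h1 <;> rcases h2 with h2 | h2 <;> subst h1 <;>
        simp [ReflEquiv, h2]

/-- The number of reflective-equivalence classes of words in a set `S`. -/
noncomputable def nClasses (S : Set (List A)) : ℕ :=
  Set.ncard (Quotient.mk (reflSetoid A) '' S)

/-- The reflection complexity `r_u(n)`. -/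
noncomputable def reflComplexity (u : ℕ → A) (n : ℕ) : ℕ := nClasses (LangN u n)

/-- The factor complexity `C_u(n) = #L_n(u)`. -/
noncomputable def factorComplexity (u : ℕ → A) (n : ℕ) : ℕ := (LangN u n).ncard

/-- The palindromic complexity `P_u(n)`. -/
noncomputable def palComplexity (u : ℕ → A) (n : ℕ) : ℕ :=
  Set.ncard {w ∈ LangN u n | w.reverse = w}

/-- Both-sided extensions of `w` in the language of `u`. -/
def Bext (u : ℕ → A) (w : List A) : Set (List A) :=
  {x ∈ Lang u | ∃ a b : A, x = a :: (w ++ [b])}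

/-- Right extensions of `w` in the language of `u`. -/
def Rext (u : ℕ → A) (w : List A) : Set (List A) :=
  {x ∈ Lang u | ∃ a : A, x = w ++ [a]}

/-- `T(w)`: the number of reflective-equivalence classes of `Bext(w) ∪ Bext(w̄)`. -/
noncomputable def TT (u : ℕ → A) (w : List A) : ℕ :=
  nClasses (Bext u w ∪ Bext u w.reverse)

/-- `w` is a right special factor of `u`. -/
def RightSpecial (u : ℕ → A) (w : List A) : Prop :=
  ∃ a b : A, a ≠ b ∧ w ++ [a] ∈ Lang u ∧ w ++ [b] ∈ Lang u

/-- `w` is a left special factor of `u`. -/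
def LeftSpecial (u : ℕ → A) (w : List A) : Prop :=
  ∃ a b : A, a ≠ b ∧ a :: w ∈ Lang u ∧ b :: w ∈ Lang u

/-- `u` is Sturmian: `C_u(n) = n + 1` for all `n`. -/
def Sturmian (u : ℕ → A) : Prop := ∀ n, factorComplexity u n = n + 1

/-- `u` is quasi-Sturmian: `C_u(n) = n + c` eventually. -/
def QuasiSturmian (u : ℕ → A) : Prop :=
  ∃ n₀ c : ℕ, ∀ n, n₀ ≤ n → factorComplexity u n = n + c


/-! ### Auxiliary development -/

lemma length_factorAt (u : ℕ → A) (n i : ℕ) : (factorAt u n i).length = n := by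
  simp [factorAt]

lemma mem_langN {u : ℕ → A} {w : List A} {n : ℕ} :
    w ∈ LangN u n ↔ ∃ i, w = factorAt u n i := by
  constructor
  · rintro ⟨hl, i, ho⟩
    exact ⟨i, by rwa [OccursAt, hl] at ho⟩
  · rintro ⟨i, rfl⟩
    exact ⟨length_factorAt u n i, i, by rw [OccursAt, length_factorAt]⟩

lemma factorAt_mem_langN (u : ℕ → A) (n i : ℕ) : factorAt u n i ∈ LangN u n :=
  mem_langN.2 ⟨i, rfl⟩

lemma factorAt_snoc (u : ℕ → A) (n i : ℕ) :
    factorAt u (n+1) i = factorAt u n i ++ [u (i+n)] := by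
  simp [factorAt, List.range_succ]

lemma factorAt_cons (u : ℕ → A) (n i : ℕ) :
    factorAt u (n+1) i = u i :: factorAt u n (i+1) := by
  simp only [factorAt, List.range_succ_eq_map, List.map_cons, add_zero, List.map_map]
  refine congrArg _ (List.map_congr_left fun a _ => ?_)
  simp only [Function.comp_apply]
  congr 1
  omega

lemma take_factorAt (u : ℕ → A) {k n : ℕ} (h : k ≤ n) (i : ℕ) :
    (factorAt u n i).take k = factorAt u k i := by
  simp only [factorAt, ← List.map_take, List.take_range, Nat.min_eq_left h]

lemma tail_factorAt (u : ℕ → A) (n i : ℕ) :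
    (factorAt u (n+1) i).tail = factorAt u n (i+1) := by
  rw [factorAt_cons]; rfl

lemma dropLast_factorAt (u : ℕ → A) (n i : ℕ) :
    (factorAt u (n+1) i).dropLast = factorAt u n i := by
  rw [factorAt_snoc]; exact List.dropLast_concat

lemma head?_factorAt (u : ℕ → A) (n i : ℕ) :
    (factorAt u (n+1) i).head? = some (u i) := by
  rw [factorAt_cons]; rfl

lemma factorAt_snoc' (u : ℕ → A) (n i : ℕ) :
    factorAt u (n+2) i = factorAt u (n+1) i ++ [u (i+(n+1))] :=
  factorAt_snoc u (n+1) i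

lemma factorAt_cons' (u : ℕ → A) (n i : ℕ) :
    factorAt u (n+2) i = u i :: factorAt u (n+1) (i+1) :=
  factorAt_cons u (n+1) i

lemma tail_factorAt' (u : ℕ → A) (n i : ℕ) :
    (factorAt u (n+2) i).tail = factorAt u (n+1) (i+1) :=
  tail_factorAt u (n+1) i

/-- The middle of a word: drop the first and the last letter. -/
def mid (l : List A) : List A := l.tail.dropLast

lemma mid_factorAt (u : ℕ → A) (n i : ℕ) :
    mid (factorAt u (n+2) i) = factorAt u n (i+1) := by
  rw [mid, tail_factorAt', dropLast_factorAt]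

lemma mid_reverse (l : List A) : mid l.reverse = (mid l).reverse := by
  rcases l.eq_nil_or_concat with rfl | ⟨xs, x, rfl⟩
  · rfl
  · cases xs with
    | nil => rfl
    | cons y ys =>
      simp [mid, List.reverse_append, List.dropLast_concat]

/-- Abbreviation for the canonical quotient map to reflection classes. -/
abbrev qmk : List A → Quotient (reflSetoid A) := Quotient.mk (reflSetoid A)

/-- The set of reflection classes of factors of length `m`. -/
abbrev Qset (u : ℕ → A) (m : ℕ) : Set (Quotient (reflSetoid A)) := qmk '' LangN u m

lemma reflComplexity_eq (u : ℕ → A) (m : ℕ) :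
    reflComplexity u m = (Qset u m).ncard := rfl

lemma qmk_reverse (w : List A) : qmk (w.reverse) = qmk w :=
  Quotient.sound (Or.inr rfl)

lemma reflEquiv_of_qmk_eq {w v : List A} (h : qmk w = qmk v) :
    w = v ∨ w = v.reverse := Quotient.exact h

lemma mid_respects (a b : List A) (h : ReflEquiv a b) : qmk (mid a) = qmk (mid b) := by
  obtain rfl | rfl := h
  · rfl
  · rw [mid_reverse]; exact qmk_reverse _

/-- The middle map, descended to reflection classes. -/
def midq : Quotient (reflSetoid A) → Quotient (reflSetoid A) :=
  Quotient.lift (fun w => qmk (mid w)) mid_respects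

lemma midq_mk (w : List A) : midq (qmk w) = qmk (mid w) := rfl

lemma langN_finite [Fintype A] (u : ℕ → A) (n : ℕ) : (LangN u n).Finite :=
  Set.Finite.subset (List.finite_length_eq A n) fun _ hw => hw.1

lemma Qset_finite [Fintype A] (u : ℕ → A) (n : ℕ) : (Qset u n).Finite :=
  (langN_finite u n).image _

/-- The shift of a sequence. -/
def shf (u : ℕ → A) : ℕ → A := fun j => u (j+1)

lemma factorAt_shf (u : ℕ → A) (m i : ℕ) :
    factorAt (shf u) m i = factorAt u m (i+1) := by
  simp only [factorAt, shf]
  refine List.map_congr_left fun a _ => ?_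
  congr 1
  omega

lemma langN_shf_subset (u : ℕ → A) (m : ℕ) :
    LangN (shf u) m ⊆ LangN u m := by
  intro w hw
  obtain ⟨i, rfl⟩ := mem_langN.1 hw
  rw [factorAt_shf]
  exact factorAt_mem_langN u m (i+1)

lemma Qset_shf_subset (u : ℕ → A) (m : ℕ) :
    Qset (shf u) m ⊆ Qset u m :=
  Set.image_mono (langN_shf_subset u m)

lemma langN_shf_eq (u : ℕ → A) (n : ℕ)
    (hun : ∀ i, factorAt u n (i+1) ≠ factorAt u n 0) :
    LangN (shf u) n = LangN u n \ {factorAt u n 0} := by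
  ext w
  constructor
  · intro hw
    obtain ⟨i, rfl⟩ := mem_langN.1 hw
    rw [factorAt_shf]
    exact ⟨factorAt_mem_langN u n (i+1), hun i⟩
  · rintro ⟨hw, hne⟩
    obtain ⟨i, rfl⟩ := mem_langN.1 hw
    match i with
    | 0 => exact absurd rfl hne
    | (i+1) => exact mem_langN.2 ⟨i, (factorAt_shf u n i).symm⟩

lemma halfbad_Qset (u : ℕ → A) (n : ℕ)
    (hrev : ∃ i, factorAt u n (i+1) = (factorAt u n 0).reverse) :
    Qset (shf u) n = Qset u n := by
  refine subset_antisymm (Qset_shf_subset u n) ?_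
  rintro q ⟨w, hw, rfl⟩
  obtain ⟨i, rfl⟩ := mem_langN.1 hw
  match i with
  | (i+1) => exact ⟨factorAt u n (i+1), mem_langN.2 ⟨i, (factorAt_shf u n i).symm⟩, rfl⟩
  | 0 =>
    obtain ⟨i0, h0⟩ := hrev
    refine ⟨factorAt u n (i0+1), mem_langN.2 ⟨i0, (factorAt_shf u n i0).symm⟩, ?_⟩
    rw [h0]
    exact qmk_reverse _

lemma fullbad_not_mem (u : ℕ → A) (n : ℕ)
    (hun : ∀ i, factorAt u n (i+1) ≠ factorAt u n 0)
    (hrev : ∀ i, factorAt u n (i+1) ≠ (factorAt u n 0).reverse) :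
    qmk (factorAt u n 0) ∉ Qset (shf u) n := by
  rintro ⟨w, hw, hq⟩
  obtain ⟨i, rfl⟩ := mem_langN.1 hw
  rw [factorAt_shf] at hq
  obtain h | h := reflEquiv_of_qmk_eq hq
  · exact hun i h
  · exact hrev i h

lemma fullbad_Qset (u : ℕ → A) (n : ℕ)
    (hun : ∀ i, factorAt u n (i+1) ≠ factorAt u n 0) :
    Qset u n = insert (qmk (factorAt u n 0)) (Qset (shf u) n) := by
  apply subset_antisymm
  · rintro q ⟨w, hw, rfl⟩
    obtain ⟨i, rfl⟩ := mem_langN.1 hw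
    match i with
    | 0 => exact Set.mem_insert _ _
    | (i+1) =>
      exact Set.mem_insert_of_mem _
        ⟨factorAt u n (i+1), mem_langN.2 ⟨i, (factorAt_shf u n i).symm⟩, rfl⟩
  · rw [Set.insert_subset_iff]
    exact ⟨⟨_, factorAt_mem_langN u n 0, rfl⟩, Qset_shf_subset u n⟩

lemma fullbad_not_mem_two (u : ℕ → A) (n : ℕ)
    (hun : ∀ i, factorAt u n (i+1) ≠ factorAt u n 0)
    (hrev : ∀ i, factorAt u n (i+1) ≠ (factorAt u n 0).reverse) :
    qmk (factorAt u (n+2) 0) ∉ Qset (shf u) (n+2) := by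
  rintro ⟨w, hw, hq⟩
  obtain ⟨i, rfl⟩ := mem_langN.1 hw
  rw [factorAt_shf] at hq
  obtain h | h := reflEquiv_of_qmk_eq hq
  · apply hun i
    have h2 := congrArg (List.take n) h
    rwa [take_factorAt u (by omega) (i+1), take_factorAt u (by omega) 0] at h2
  · apply hrev (i+2)
    have h2 : factorAt u (n+2) (i+1) = u (i+1) :: u (i+2) :: factorAt u n (i+3) := by
      rw [factorAt_cons', factorAt_cons]
    have h3 : (factorAt u (n+2) 0).reverse
        = u (n+1) :: u n :: (factorAt u n 0).reverse := by
      rw [factorAt_snoc' u n 0, factorAt_snoc u n 0]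
      simp [List.reverse_append]
    rw [h2, h3] at h
    simp only [List.cons.injEq] at h
    rw [show i + 2 + 1 = i + 3 from by omega]
    exact h.2.2

lemma eventuallyPeriodic_of_shf {u : ℕ → A}
    (h : EventuallyPeriodic (shf u)) : EventuallyPeriodic u := by
  obtain ⟨N, p, hp, h⟩ := h
  refine ⟨N+1, p, hp, ?_⟩
  intro i hi
  obtain ⟨j, rfl⟩ : ∃ j, i = j + 1 := ⟨i - 1, by omega⟩
  have h2 := h j (by omega)
  simp only [shf] at h2
  rw [show j + 1 + p = j + p + 1 from by omega]
  exact h2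

lemma mid_image_subset (u : ℕ → A) (n : ℕ) :
    midq '' Qset u (n+2) ⊆ Qset u n := by
  rintro q ⟨q', ⟨w, hw, rfl⟩, rfl⟩
  obtain ⟨i, rfl⟩ := mem_langN.1 hw
  rw [midq_mk, mid_factorAt]
  exact ⟨_, factorAt_mem_langN u n (i+1), rfl⟩

lemma base_subset (u : ℕ → A) (n : ℕ)
    (hrep : ∃ i, factorAt u n (i+1) = factorAt u n 0) :
    Qset u n ⊆ midq '' Qset u (n+2) := by
  rintro q ⟨w, hw, rfl⟩
  obtain ⟨i, rfl⟩ := mem_langN.1 hw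
  have hocc : ∃ i', factorAt u n (i'+1) = factorAt u n i := by
    match i with
    | 0 => exact hrep
    | (i+1) => exact ⟨i, rfl⟩
  obtain ⟨i', hi'⟩ := hocc
  refine ⟨qmk (factorAt u (n+2) i'), ⟨_, factorAt_mem_langN u (n+2) i', rfl⟩, ?_⟩
  rw [midq_mk, mid_factorAt, hi']

lemma base_mono [Fintype A] (u : ℕ → A) (n : ℕ)
    (hrep : ∃ i, factorAt u n (i+1) = factorAt u n 0) :
    reflComplexity u n ≤ reflComplexity u (n+2) := by
  rw [reflComplexity_eq, reflComplexity_eq]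
  calc (Qset u n).ncard
      ≤ (midq '' Qset u (n+2)).ncard :=
        Set.ncard_le_ncard (base_subset u n hrep) ((Qset_finite u (n+2)).image _)
    _ ≤ (Qset u (n+2)).ncard := Set.ncard_image_le (Qset_finite u (n+2))

lemma base_det [Fintype A] (u : ℕ → A) (n : ℕ)
    (hrep : ∃ i, factorAt u n (i+1) = factorAt u n 0)
    (heq : reflComplexity u (n+2) = reflComplexity u n) :
    ∀ j j', factorAt u (n+1) j = factorAt u (n+1) j' →
      u (j + (n+1)) = u (j' + (n+1)) := by
  have himg : midq '' Qset u (n+2) = Qset u n :=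
    subset_antisymm (mid_image_subset u n) (base_subset u n hrep)
  have hinj : Set.InjOn midq (Qset u (n+2)) :=
    Set.injOn_of_ncard_image_eq
      (by rw [himg, ← reflComplexity_eq, ← reflComplexity_eq, heq])
      (Qset_finite u (n+2))
  intro j j' hf
  have h0 : u j = u j' := by
    have h2 := congrArg List.head? hf
    rw [head?_factorAt, head?_factorAt] at h2
    simpa using h2
  have htail : factorAt u n (j+1) = factorAt u n (j'+1) := by
    have h2 := congrArg List.tail hf
    rwa [tail_factorAt, tail_factorAt] at h2
  have hq : qmk (factorAt u (n+2) j) = qmk (factorAt u (n+2) j') :=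
    hinj ⟨_, factorAt_mem_langN u (n+2) j, rfl⟩ ⟨_, factorAt_mem_langN u (n+2) j', rfl⟩
      (by rw [midq_mk, midq_mk, mid_factorAt, mid_factorAt, htail])
  obtain h | h := reflEquiv_of_qmk_eq hq
  · rw [factorAt_snoc' u n j, factorAt_snoc' u n j', hf] at h
    simpa using List.append_cancel_left h
  · have hrev2 : factorAt u (n+2) j' = (factorAt u (n+2) j).reverse := by
      rw [h, List.reverse_reverse]
    have e1 : factorAt u (n+1) j ++ [u (j+(n+1))]
        = (factorAt u (n+1) (j'+1)).reverse ++ [u j'] := by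
      rw [← factorAt_snoc' u n j, h, factorAt_cons' u n j', List.reverse_cons]
    have e2 : factorAt u (n+1) j' ++ [u (j'+(n+1))]
        = (factorAt u (n+1) (j+1)).reverse ++ [u j] := by
      rw [← factorAt_snoc' u n j', hrev2, factorAt_cons' u n j, List.reverse_cons]
    have l1 : u (j+(n+1)) = u j' := by
      have h2 := (List.append_inj e1 (by simp [length_factorAt])).2
      simpa using h2
    have l2 : u (j'+(n+1)) = u j := by
      have h2 := (List.append_inj e2 (by simp [length_factorAt])).2
      simpa using h2
    rw [l1, l2]
    exact h0.symm

lemma det_to_periodic [Fintype A] (u : ℕ → A) (n : ℕ)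
    (hdet : ∀ j j', factorAt u (n+1) j = factorAt u (n+1) j' →
      u (j + (n+1)) = u (j' + (n+1))) : EventuallyPeriodic u := by
  have main : ∀ a b, a < b → factorAt u (n+1) a = factorAt u (n+1) b →
      EventuallyPeriodic u := by
    intro a b hlt hab
    have hstep' : ∀ m m', factorAt u (n+1) m = factorAt u (n+1) m' →
        factorAt u (n+1) (m+1) = factorAt u (n+1) (m'+1) := by
      intro m m' hm
      have hu := hdet _ _ hm
      have A1 : factorAt u (n+2) m = factorAt u (n+2) m' := by
        rw [factorAt_snoc' u n m, factorAt_snoc' u n m', hm, hu]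
      have h2 := congrArg List.tail A1
      rwa [tail_factorAt' u n m, tail_factorAt' u n m'] at h2
    have hper : ∀ d, factorAt u (n+1) (a+d) = factorAt u (n+1) (a+d+(b-a)) := by
      intro d
      induction d with
      | zero =>
        rw [show a + 0 + (b - a) = b from by omega, show a + 0 = a from rfl]
        exact hab
      | succ d ih =>
        have h2 := hstep' _ _ ih
        rw [show a + (d+1) = a + d + 1 from by omega]
        rw [show a + d + 1 + (b - a) = a + d + (b - a) + 1 from by omega]
        exact h2
    refine ⟨a, b - a, by omega, ?_⟩
    intro i hi
    obtain ⟨d, rfl⟩ : ∃ d, i = a + d := ⟨i - a, by omega⟩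
    have h := hper d
    have h2 := congrArg List.head? h
    rw [head?_factorAt, head?_factorAt] at h2
    have h3 : u (a+d) = u (a+d+(b-a)) := by simpa using h2
    exact h3.symm
  obtain ⟨a, b, hne, hab⟩ := Finite.exists_ne_map_eq_of_infinite
    (fun m : ℕ => (fun k : Fin (n+1) => u (m + (k : ℕ))))
  have hfac : factorAt u (n+1) a = factorAt u (n+1) b := by
    simp only [factorAt]
    refine List.map_congr_left fun k hk => ?_
    have hk' : k < n+1 := List.mem_range.1 hk
    exact congrFun hab ⟨k, hk'⟩
  rcases Nat.lt_or_ge a b with hlt | hge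
  · exact main a b hlt hfac
  · exact main b a (by omega) hfac.symm

lemma rmono [Fintype A] (n : ℕ) :
    ∀ (c : ℕ) (u : ℕ → A), (LangN u n).ncard ≤ c →
      reflComplexity u n ≤ reflComplexity u (n+2) := by
  intro c
  induction c with
  | zero =>
    intro u hc
    exfalso
    have hpos : 0 < (LangN u n).ncard :=
      (Set.ncard_pos (langN_finite u n)).2 ⟨_, factorAt_mem_langN u n 0⟩
    omega
  | succ c ih =>
    intro u hc
    by_cases hrep : ∃ i, factorAt u n (i+1) = factorAt u n 0
    · exact base_mono u n hrep
    · push_neg at hrep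
      have hvc : (LangN (shf u) n).ncard ≤ c := by
        have h1 : LangN (shf u) n = LangN u n \ {factorAt u n 0} := langN_shf_eq u n hrep
        have h2 : (LangN u n \ {factorAt u n 0}).ncard < (LangN u n).ncard :=
          Set.ncard_diff_singleton_lt_of_mem (factorAt_mem_langN u n 0) (langN_finite u n)
        rw [h1]
        omega
      by_cases hrev : ∃ i, factorAt u n (i+1) = (factorAt u n 0).reverse
      · have hQ : Qset (shf u) n = Qset u n := halfbad_Qset u n hrev
        calc reflComplexity u n
            = reflComplexity (shf u) n := by
              rw [reflComplexity_eq, reflComplexity_eq, hQ]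
          _ ≤ reflComplexity (shf u) (n+2) := ih (shf u) hvc
          _ ≤ reflComplexity u (n+2) := by
              rw [reflComplexity_eq, reflComplexity_eq]
              exact Set.ncard_le_ncard (Qset_shf_subset u (n+2)) (Qset_finite u (n+2))
      · push_neg at hrev
        have hins : Qset u n = insert (qmk (factorAt u n 0)) (Qset (shf u) n) :=
          fullbad_Qset u n hrep
        have hnm : qmk (factorAt u n 0) ∉ Qset (shf u) n := fullbad_not_mem u n hrep hrev
        have hrn : reflComplexity u n = reflComplexity (shf u) n + 1 := by
          rw [reflComplexity_eq, reflComplexity_eq, hins,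
            Set.ncard_insert_of_notMem hnm (Qset_finite (shf u) n)]
        have hnm2 : qmk (factorAt u (n+2) 0) ∉ Qset (shf u) (n+2) :=
          fullbad_not_mem_two u n hrep hrev
        have hsub : insert (qmk (factorAt u (n+2) 0)) (Qset (shf u) (n+2)) ⊆ Qset u (n+2) := by
          rw [Set.insert_subset_iff]
          exact ⟨⟨_, factorAt_mem_langN u (n+2) 0, rfl⟩, Qset_shf_subset u (n+2)⟩
        have hge : reflComplexity (shf u) (n+2) + 1 ≤ reflComplexity u (n+2) := by
          calc reflComplexity (shf u) (n+2) + 1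
              = (insert (qmk (factorAt u (n+2) 0)) (Qset (shf u) (n+2))).ncard := by
                rw [Set.ncard_insert_of_notMem hnm2 (Qset_finite (shf u) (n+2)),
                  reflComplexity_eq]
            _ ≤ (Qset u (n+2)).ncard := Set.ncard_le_ncard hsub (Qset_finite u (n+2))
            _ = reflComplexity u (n+2) := (reflComplexity_eq u (n+2)).symm
        have hihv := ih (shf u) hvc
        omega

lemma key2 [Fintype A] (n : ℕ) :
    ∀ (c : ℕ) (u : ℕ → A), (LangN u n).ncard ≤ c →
      reflComplexity u (n+2) = reflComplexity u n → EventuallyPeriodic u := by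
  intro c
  induction c with
  | zero =>
    intro u hc _
    exfalso
    have hpos : 0 < (LangN u n).ncard :=
      (Set.ncard_pos (langN_finite u n)).2 ⟨_, factorAt_mem_langN u n 0⟩
    omega
  | succ c ih =>
    intro u hc heq
    by_cases hrep : ∃ i, factorAt u n (i+1) = factorAt u n 0
    · exact det_to_periodic u n (base_det u n hrep heq)
    · push_neg at hrep
      have hvc : (LangN (shf u) n).ncard ≤ c := by
        have h1 : LangN (shf u) n = LangN u n \ {factorAt u n 0} := langN_shf_eq u n hrep
        have h2 : (LangN u n \ {factorAt u n 0}).ncard < (LangN u n).ncard :=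
          Set.ncard_diff_singleton_lt_of_mem (factorAt_mem_langN u n 0) (langN_finite u n)
        rw [h1]
        omega
      have hmono_v : reflComplexity (shf u) n ≤ reflComplexity (shf u) (n+2) :=
        rmono n c (shf u) hvc
      by_cases hrev : ∃ i, factorAt u n (i+1) = (factorAt u n 0).reverse
      · have hQ : Qset (shf u) n = Qset u n := halfbad_Qset u n hrev
        have h1 : reflComplexity (shf u) n = reflComplexity u n := by
          rw [reflComplexity_eq, reflComplexity_eq, hQ]
        have h2 : reflComplexity (shf u) (n+2) ≤ reflComplexity u (n+2) := by
          rw [reflComplexity_eq, reflComplexity_eq]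
          exact Set.ncard_le_ncard (Qset_shf_subset u (n+2)) (Qset_finite u (n+2))
        have heqv : reflComplexity (shf u) (n+2) = reflComplexity (shf u) n := by omega
        exact eventuallyPeriodic_of_shf (ih (shf u) hvc heqv)
      · push_neg at hrev
        have hins : Qset u n = insert (qmk (factorAt u n 0)) (Qset (shf u) n) :=
          fullbad_Qset u n hrep
        have hnm : qmk (factorAt u n 0) ∉ Qset (shf u) n := fullbad_not_mem u n hrep hrev
        have hrn : reflComplexity u n = reflComplexity (shf u) n + 1 := by
          rw [reflComplexity_eq, reflComplexity_eq, hins,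
            Set.ncard_insert_of_notMem hnm (Qset_finite (shf u) n)]
        have hnm2 : qmk (factorAt u (n+2) 0) ∉ Qset (shf u) (n+2) :=
          fullbad_not_mem_two u n hrep hrev
        have hsub : insert (qmk (factorAt u (n+2) 0)) (Qset (shf u) (n+2)) ⊆ Qset u (n+2) := by
          rw [Set.insert_subset_iff]
          exact ⟨⟨_, factorAt_mem_langN u (n+2) 0, rfl⟩, Qset_shf_subset u (n+2)⟩
        have hge : reflComplexity (shf u) (n+2) + 1 ≤ reflComplexity u (n+2) := by
          calc reflComplexity (shf u) (n+2) + 1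
              = (insert (qmk (factorAt u (n+2) 0)) (Qset (shf u) (n+2))).ncard := by
                rw [Set.ncard_insert_of_notMem hnm2 (Qset_finite (shf u) (n+2)),
                  reflComplexity_eq]
            _ ≤ (Qset u (n+2)).ncard := Set.ncard_le_ncard hsub (Qset_finite u (n+2))
            _ = reflComplexity u (n+2) := (reflComplexity_eq u (n+2)).symm
        have heqv : reflComplexity (shf u) (n+2) = reflComplexity (shf u) n := by omega
        exact eventuallyPeriodic_of_shf (ih (shf u) hvc heqv)

lemma reflComplexity_bounded [Fintype A] (u : ℕ → A) (hper : EventuallyPeriodic u) :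
    ∃ B, ∀ m, reflComplexity u m ≤ B := by
  obtain ⟨N, p, hp, h⟩ := hper
  refine ⟨N + p, fun m => ?_⟩
  have hsmall : ∀ i, ∃ i' < N + p, factorAt u m i' = factorAt u m i := by
    intro i
    induction i using Nat.strong_induction_on with
    | _ i ih2 =>
      by_cases hlt : i < N + p
      · exact ⟨i, hlt, rfl⟩
      · have hfac : factorAt u m (i - p) = factorAt u m i := by
          simp only [factorAt]
          refine List.map_congr_left fun k _ => ?_
          have h1 := h (i - p + k) (by omega)
          rw [show i - p + k + p = i + k from by omega] at h1
          exact h1.symm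
        obtain ⟨i', hi', he⟩ := ih2 (i - p) (by omega)
        exact ⟨i', hi', by rw [he, hfac]⟩
  have hsub : LangN u m ⊆ (fun i => factorAt u m i) '' Set.Iio (N + p) := by
    intro w hw
    obtain ⟨i, rfl⟩ := mem_langN.1 hw
    obtain ⟨i', hi', he⟩ := hsmall i
    exact ⟨i', hi', he⟩
  calc reflComplexity u m ≤ (LangN u m).ncard := Set.ncard_image_le (langN_finite u m)
    _ ≤ ((fun i => factorAt u m i) '' Set.Iio (N + p)).ncard :=
        Set.ncard_le_ncard hsub ((Set.finite_Iio _).image _)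
    _ ≤ (Set.Iio (N + p)).ncard := Set.ncard_image_le (Set.finite_Iio _)
    _ = N + p := by
        rw [show (Set.Iio (N+p)) = ↑(Finset.range (N+p)) from (Finset.coe_range _).symm,
          Set.ncard_coe_finset, Finset.card_range]


/-- `u` is eventually periodic iff `r_u(n+2) = r_u(n)` for some `n`. -/
theorem stmt0 {A : Type*} [Fintype A] (u : ℕ → A) :
    EventuallyPeriodic u ↔
      ∃ n : ℕ, reflComplexity u (n + 2) = reflComplexity u n := by
  constructor
  · intro hper
    by_contra hno
    push_neg at hno
    have grow : ∀ k, k ≤ reflComplexity u (2*k) := by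
      intro k
      induction k with
      | zero => exact Nat.zero_le _
      | succ k ih =>
        have h1 : reflComplexity u (2*k) ≤ reflComplexity u (2*k+2) :=
          rmono (2*k) ((LangN u (2*k)).ncard) u le_rfl
        have h2 := hno (2*k)
        rw [show 2*(k+1) = 2*k+2 from by omega]
        omega
    obtain ⟨B, hB⟩ := reflComplexity_bounded u hper
    have hg := grow (B+1)
    have hb := hB (2*(B+1))
    omega
  · rintro ⟨n, h⟩
    exact key2 n ((LangN u n).ncard) u le_rfl h

end ReflPaper
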